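/- Let C : ℝ → ℝⁿ be arclength-parametrized with C'' = 𝔭_T((α+A)C + v), A antisymmetric, A v = 0, T = C'. Then the quantity V(s) = exp(½α‖C(s)‖² + ⟨v, C(s)⟩)·⟨T(s), A C(s)⟩ satisfies V'(s) = exp(½α‖C(s)‖² + ⟨v, C(s)⟩)·‖𝔭_{T(s)}(A C(s))‖² ≥ 0. -/

import Mathlib

open Matrix
open scoped RealInnerProductSpace

theorem stmt17 (n : ℕ) (α : ℝ) (A : Matrix (Fin n) (Fin n) ℝ) (hA : Aᵀ = -A)
    (v : EuclideanSpace ℝ (Fin n)) (hv : A.toEuclideanLin v = 0)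
    (C : ℝ → EuclideanSpace ℝ (Fin n))
    (hC : ContDiff ℝ 2 C)
    (harc : ∀ s, ‖deriv C s‖ = 1)
    (heq : ∀ s, deriv (deriv C) s
      = (α • C s + A.toEuclideanLin (C s) + v)
        - ⟪α • C s + A.toEuclideanLin (C s) + v, deriv C s⟫ • deriv C s)
    (V : ℝ → ℝ)
    (hV : ∀ s, V s = Real.exp (α / 2 * ‖C s‖ ^ 2 + ⟪v, C s⟫)
      * ⟪deriv C s, A.toEuclideanLin (C s)⟫) :
    ∀ s, deriv V s = Real.exp (α / 2 * ‖C s‖ ^ 2 + ⟪v, C s⟫)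
        * ‖A.toEuclideanLin (C s)
            - ⟪A.toEuclideanLin (C s), deriv C s⟫ • deriv C s‖ ^ 2 ∧
      0 ≤ deriv V s := by
  intro s
  set L : EuclideanSpace ℝ (Fin n) →ₗ[ℝ] EuclideanSpace ℝ (Fin n) := A.toEuclideanLin with hL
  -- skew symmetry
  have skew : ∀ x y : EuclideanSpace ℝ (Fin n), ⟪x, L y⟫ = -⟪L x, y⟫ := by
    intro x y
    have h1 : (Aᵀ).toEuclideanLin = LinearMap.adjoint L := by
      have := Matrix.toEuclideanLin_conjTranspose_eq_adjoint A
      rwa [Matrix.conjTranspose_eq_transpose_of_trivial] at this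
    have h2 : ⟪x, L y⟫ = ⟪LinearMap.adjoint L x, y⟫ :=
      (LinearMap.adjoint_inner_left L y x).symm
    rw [h2, ← h1, hA]
    simp [hL]
  have skew_self : ∀ x : EuclideanSpace ℝ (Fin n), ⟪x, L x⟫ = 0 := by
    intro x
    have h := skew x x
    rw [real_inner_comm x (L x)] at h
    linarith
  -- differentiability
  have hC2 := (contDiff_succ_iff_deriv (n := 1)).1 (by norm_num at hC ⊢; exact hC)
  have hCdiff : Differentiable ℝ C := hC2.1
  have hTdiff : Differentiable ℝ (deriv C) := hC2.2.2.differentiable one_ne_zero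
  set T : EuclideanSpace ℝ (Fin n) := deriv C s with hT
  have hCs : HasDerivAt C T s := (hCdiff s).hasDerivAt
  set w : EuclideanSpace ℝ (Fin n) := α • C s + L (C s) + v with hw
  set T' : EuclideanSpace ℝ (Fin n) := w - ⟪w, T⟫ • T with hT'
  have hTs : HasDerivAt (deriv C) T' s := by
    have := (hTdiff s).hasDerivAt
    rwa [heq s] at this
  have hLC : HasDerivAt (fun t => L (C t)) (L T) s := by
    have : HasFDerivAt (L.toContinuousLinearMap) (L.toContinuousLinearMap) (C s) :=
      L.toContinuousLinearMap.hasFDerivAt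
    exact this.comp_hasDerivAt s hCs
  -- derivative of f
  have hf : HasDerivAt (fun t => α / 2 * ‖C t‖ ^ 2 + ⟪v, C t⟫)
      (α / 2 * (⟪C s, T⟫ + ⟪T, C s⟫) + (⟪v, T⟫ + ⟪(0 : EuclideanSpace ℝ (Fin n)), C s⟫)) s := by
    have h1 : HasDerivAt (fun t => (⟪C t, C t⟫ : ℝ)) (⟪C s, T⟫ + ⟪T, C s⟫) s :=
      HasDerivAt.inner ℝ hCs hCs
    have h2 : HasDerivAt (fun t => (⟪v, C t⟫ : ℝ)) (⟪v, T⟫ + ⟪(0 : EuclideanSpace ℝ (Fin n)), C s⟫) s :=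
      HasDerivAt.inner ℝ (hasDerivAt_const s v) hCs
    have h1' : HasDerivAt (fun t => α / 2 * ‖C t‖ ^ 2) (α / 2 * (⟪C s, T⟫ + ⟪T, C s⟫)) s := by
      have : (fun t => α / 2 * ‖C t‖ ^ 2) = fun t => α / 2 * ⟪C t, C t⟫ := by
        funext t; rw [real_inner_self_eq_norm_sq]
      rw [this]
      exact h1.const_mul _
    exact h1'.add h2
  -- derivative of g
  have hg : HasDerivAt (fun t => (⟪deriv C t, L (C t)⟫ : ℝ))
      (⟪T, L T⟫ + ⟪T', L (C s)⟫) s := HasDerivAt.inner ℝ hTs hLC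
  have hVd : HasDerivAt V
      ((Real.exp (α / 2 * ‖C s‖ ^ 2 + ⟪v, C s⟫) *
          (α / 2 * (⟪C s, T⟫ + ⟪T, C s⟫) + (⟪v, T⟫ + ⟪(0 : EuclideanSpace ℝ (Fin n)), C s⟫))) *
        ⟪deriv C s, L (C s)⟫ +
        Real.exp (α / 2 * ‖C s‖ ^ 2 + ⟪v, C s⟫) * (⟪T, L T⟫ + ⟪T', L (C s)⟫)) s := by
    have := (hf.exp.mul hg)
    have hfun : V = fun t => Real.exp (α / 2 * ‖C t‖ ^ 2 + ⟪v, C t⟫) * ⟪deriv C t, L (C t)⟫ := by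
      funext t; exact hV t
    rw [hfun]
    exact this
  -- key inner product facts
  have hTT : ⟪T, L T⟫ = 0 := skew_self T
  have hCC : ⟪C s, L (C s)⟫ = 0 := skew_self (C s)
  have hvC : ⟪v, L (C s)⟫ = 0 := by rw [skew, hv]; simp
  have hTnorm : ⟪T, T⟫ = 1 := by
    rw [real_inner_self_eq_norm_sq, hT, harc s]; norm_num
  -- compute ⟪T', L (C s)⟫
  have hT'LC : ⟪T', L (C s)⟫ = ‖L (C s)‖ ^ 2 - ⟪w, T⟫ * ⟪T, L (C s)⟫ := by
    rw [hT', hw]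
    rw [inner_sub_left, inner_add_left, inner_add_left, inner_smul_left, real_inner_smul_left]
    rw [hCC, hvC, real_inner_self_eq_norm_sq]
    simp [RCLike.star_def]
  have hwT : ⟪w, T⟫ = α * ⟪C s, T⟫ + ⟪L (C s), T⟫ + ⟪v, T⟫ := by
    rw [hw, inner_add_left, inner_add_left, real_inner_smul_left]
  have hderiv : deriv V s = Real.exp (α / 2 * ‖C s‖ ^ 2 + ⟪v, C s⟫) *
      (‖L (C s)‖ ^ 2 - ⟪L (C s), T⟫ ^ 2) := by
    rw [hVd.deriv, hT'LC, hTT, hwT]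
    have hsym1 : ⟪T, C s⟫ = ⟪C s, T⟫ := real_inner_comm _ _
    have hsym2 : (⟪deriv C s, L (C s)⟫ : ℝ) = ⟪L (C s), T⟫ := by
      rw [hT]; exact real_inner_comm _ _
    have hsym3 : (⟪T, L (C s)⟫ : ℝ) = ⟪L (C s), T⟫ := real_inner_comm _ _
    rw [hsym1, hsym2]
    simp only [inner_zero_left]
    ring
  have hnormeq : ‖L (C s) - ⟪L (C s), T⟫ • T‖ ^ 2 = ‖L (C s)‖ ^ 2 - ⟪L (C s), T⟫ ^ 2 := by
    rw [norm_sub_sq_real, real_inner_smul_right, norm_smul]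
    rw [hT, harc s]
    simp
    ring
  constructor
  · rw [hderiv, ← hnormeq]
  · rw [hderiv, ← hnormeq]
    positivity
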